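/- Let d, q > 0, K > 0, k ≥ 0, and r₁, r₂ ≥ 0. If r₃ = 0, then the triple (u₁,u₂,u₃) = (K, K, K(d+q)/d) satisfies the equilibrium system: r₁u₁(1−u₁/K) − (d+q+k)u₁ + ku₂ + du₃ = 0, r₂u₂(1−u₂/K) + ku₁ − (d+q+k)u₂ + du₃ = 0, and r₃u₃(1−u₃/K) + (d+q)u₁ + (d+q)u₂ − 2du₃ = 0. Consequently, since the positive equilibrium is unique, the network biomass u₁+u₂+u₃ = K(2 + (d+q)/d) is independent of k. -/
import Mathlib

/-- If `r₃ = 0`, then `(K, K, K(d+q)/d)` solves the tributary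
equilibrium system, and hence (by uniqueness of the positive equilibrium) the
network biomass equals `K(2 + (d+q)/d)`, independent of `k`. -/
theorem tributary_biomass_r3_zero (d q K k r₁ r₂ r₃ : ℝ)
    (hd : 0 < d) (hq : 0 < q) (hK : 0 < K) (hk : 0 ≤ k)
    (hr₁ : 0 ≤ r₁) (hr₂ : 0 ≤ r₂) (hr₃ : r₃ = 0)
    (u₁ u₂ u₃ : ℝ) (hu₁ : 0 < u₁) (hu₂ : 0 < u₂) (hu₃ : 0 < u₃)
    (heq₁ : r₁ * u₁ * (1 - u₁ / K) - (d + q + k) * u₁ + k * u₂ + d * u₃ = 0)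
    (heq₂ : r₂ * u₂ * (1 - u₂ / K) + k * u₁ - (d + q + k) * u₂ + d * u₃ = 0)
    (heq₃ : r₃ * u₃ * (1 - u₃ / K) + (d + q) * u₁ + (d + q) * u₂ - 2 * d * u₃ = 0)
    (huniq : ∀ v₁ v₂ v₃ : ℝ, 0 < v₁ → 0 < v₂ → 0 < v₃ →
      r₁ * v₁ * (1 - v₁ / K) - (d + q + k) * v₁ + k * v₂ + d * v₃ = 0 →
      r₂ * v₂ * (1 - v₂ / K) + k * v₁ - (d + q + k) * v₂ + d * v₃ = 0 →
      r₃ * v₃ * (1 - v₃ / K) + (d + q) * v₁ + (d + q) * v₂ - 2 * d * v₃ = 0 →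
      v₁ = u₁ ∧ v₂ = u₂ ∧ v₃ = u₃) :
    (r₁ * K * (1 - K / K) - (d + q + k) * K + k * K + d * (K * (d + q) / d) = 0 ∧
     r₂ * K * (1 - K / K) + k * K - (d + q + k) * K + d * (K * (d + q) / d) = 0 ∧
     r₃ * (K * (d + q) / d) * (1 - (K * (d + q) / d) / K) + (d + q) * K + (d + q) * K -
       2 * d * (K * (d + q) / d) = 0) ∧
    u₁ + u₂ + u₃ = K * (2 + (d + q) / d) := by
  have hd' : d ≠ 0 := ne_of_gt hd
  have e1 : r₁ * K * (1 - K / K) - (d + q + k) * K + k * K + d * (K * (d + q) / d) = 0 := by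
    field_simp; ring
  have e2 : r₂ * K * (1 - K / K) + k * K - (d + q + k) * K + d * (K * (d + q) / d) = 0 := by
    field_simp; ring
  have e3 : r₃ * (K * (d + q) / d) * (1 - (K * (d + q) / d) / K) + (d + q) * K + (d + q) * K -
      2 * d * (K * (d + q) / d) = 0 := by
    rw [hr₃]; field_simp; ring
  have h3 : 0 < K * (d + q) / d := by positivity
  obtain ⟨h1, h2, h3'⟩ := huniq K K (K * (d + q) / d) hK hK h3 e1 e2 e3
  refine ⟨⟨e1, e2, e3⟩, ?_⟩
  rw [← h1, ← h2, ← h3']; field_simp; ring
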